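/- A positive integer n satisfies a^n ≡ 1 (mod n) for every integer a coprime to n if and only if p - 1 divides n for every prime p dividing n. -/

import Mathlib

private lemma coprime_pred_self (p : ℕ) (hp : p.Prime) : Nat.Coprime p (p - 1) := by
  have h1 : 1 + (p - 1) = p := by have := hp.pos; omega
  have : Nat.Coprime (1 + (p - 1)) (p - 1) :=
    Nat.coprime_add_self_left.mpr (Nat.coprime_one_left _)
  rwa [h1] at this

private lemma totient_pow_dvd (n p : ℕ) (hn : 0 < n) (hp : p.Prime) (hpn : p ∣ n)
    (h : (p - 1) ∣ n) : (p ^ n.factorization p).totient ∣ n := by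
  have hk : 0 < n.factorization p := hp.factorization_pos_of_dvd hn.ne' hpn
  rw [Nat.totient_prime_pow hp hk]
  have h1 : p ^ (n.factorization p - 1) ∣ n :=
    dvd_trans (pow_dvd_pow p (Nat.sub_le _ 1)) (Nat.ordProj_dvd n p)
  have hcop : Nat.Coprime (p ^ (n.factorization p - 1)) (p - 1) :=
    (coprime_pred_self p hp).pow_left _
  exact hcop.mul_dvd_of_dvd_of_dvd h1 h

private lemma pow_eq_one_of_coprime (N : ℕ) (a : ℤ) (hc : IsCoprime a (N : ℤ))
    {m : ℕ} (hm : N.totient ∣ m) : ((a : ZMod N) ^ m = 1) := by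
  obtain ⟨u, v, huv⟩ := hc
  have hunit : IsUnit ((a : ZMod N)) := by
    apply IsUnit.of_mul_eq_one ((u : ZMod N))
    have := congrArg (fun x : ℤ => (x : ZMod N)) huv
    push_cast at this
    rw [ZMod.natCast_self] at this
    simpa [mul_comm] using this
  obtain ⟨w, hw⟩ := hunit
  obtain ⟨c, rfl⟩ := hm
  rw [← hw, ← Units.val_pow_eq_pow_val, pow_mul, ZMod.pow_totient, one_pow, Units.val_one]

theorem novak_carmichael_criterion (n : ℕ) (hn : 0 < n) :
    (∀ a : ℤ, IsCoprime a (n : ℤ) → a ^ n ≡ 1 [ZMOD (n : ℕ)]) ↔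
      ∀ p : ℕ, p.Prime → p ∣ n → (p - 1) ∣ n := by
  constructor
  · -- forward direction
    intro H p hp hpn
    haveI : Fact p.Prime := ⟨hp⟩
    set k := n.factorization p with hk
    have hkpos : 0 < k := hp.factorization_pos_of_dvd hn.ne' hpn
    set P := p ^ k with hP
    set m := n / P with hm
    have hcop : Nat.Coprime P m := (Nat.coprime_ordCompl hp hn.ne').pow_left k
    have hPm : P * m = n := Nat.ordProj_mul_ordCompl_eq_self n p
    obtain ⟨g, hg⟩ := IsCyclic.exists_generator (α := (ZMod p)ˣ)
    set g₀ : ℕ := ((g : ZMod p)).val with hg₀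
    obtain ⟨b, hb1, hb2⟩ := Nat.chineseRemainder hcop g₀ 1
    have hpP : p ∣ P := dvd_pow_self p hkpos.ne'
    have hbp : (b : ZMod p) = (g : ZMod p) := by
      calc (b : ZMod p) = (g₀ : ZMod p) :=
            (ZMod.natCast_eq_natCast_iff _ _ _).mpr (hb1.of_dvd hpP)
        _ = (g : ZMod p) := by simp [hg₀, ZMod.natCast_val, ZMod.cast_id]
    have hbP : Nat.Coprime b P := by
      apply Nat.Coprime.pow_right
      rw [← ZMod.isUnit_iff_coprime, hbp]
      exact g.isUnit
    have hbm : Nat.Coprime b m := by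
      rw [← ZMod.isUnit_iff_coprime]
      have : (b : ZMod m) = ((1 : ℕ) : ZMod m) := (ZMod.natCast_eq_natCast_iff _ _ _).mpr hb2
      rw [this]; simp
    have hbn : Nat.Coprime b n := by
      rw [← hPm]; exact hbP.mul_right hbm
    have hmod := H (b : ℤ) (Nat.isCoprime_iff_coprime.mpr hbn)
    have hzn : ((b : ZMod n)) ^ n = 1 := by
      have := (ZMod.intCast_eq_intCast_iff _ _ _).mpr hmod
      push_cast at this
      exact_mod_cast this
    have hpn' : (p : ℕ) ∣ n := hpn
    have hzp : ((b : ZMod p)) ^ n = 1 := by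
      have h2 := congrArg (ZMod.castHom hpn' (ZMod p)) hzn
      rw [map_pow, map_natCast, map_one] at h2
      exact h2
    rw [hbp] at hzp
    have hgn : g ^ n = 1 := by
      ext
      push_cast
      exact hzp
    have hord : orderOf g ∣ n := orderOf_dvd_of_pow_eq_one hgn
    have hcard : orderOf g = p - 1 := by
      rw [orderOf_eq_card_of_forall_mem_zpowers hg, Nat.card_eq_fintype_card, ZMod.card_units]
    rwa [hcard] at hord
  · -- backward direction
    intro h a ha
    have key : (n : ℤ) ∣ 1 - a ^ n := by
      have hfact : (n : ℤ) = ∏ p ∈ n.primeFactors, (p : ℤ) ^ n.factorization p := by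
        have hne := Nat.factorization_prod_pow_eq_self hn.ne'
        rw [Finsupp.prod, Nat.support_factorization] at hne
        exact_mod_cast (congrArg (Nat.cast : ℕ → ℤ) hne).symm
      rw [hfact]
      apply Finset.prod_dvd_of_coprime
      · intro p hp q hq hpq
        have hp' := Nat.prime_of_mem_primeFactors hp
        have hq' := Nat.prime_of_mem_primeFactors hq
        have : Nat.Coprime (p ^ n.factorization p) (q ^ n.factorization q) :=
          Nat.Coprime.pow _ _ ((Nat.coprime_primes hp' hq').mpr hpq)
        have := Nat.isCoprime_iff_coprime.mpr this
        simpa using this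
      · intro p hp
        have hp' := Nat.prime_of_mem_primeFactors hp
        have hpn : p ∣ n := Nat.dvd_of_mem_primeFactors hp
        have hPd : (p ^ n.factorization p : ℕ) ∣ n := Nat.ordProj_dvd n p
        have hcoP : IsCoprime a ((p ^ n.factorization p : ℕ) : ℤ) :=
          ha.of_isCoprime_of_dvd_right (Int.natCast_dvd_natCast.mpr hPd)
        have htot : (p ^ n.factorization p).totient ∣ n :=
          totient_pow_dvd n p hn hp' hpn (h p hp' hpn)
        have h1 : ((1 - a ^ n : ℤ) : ZMod (p ^ n.factorization p)) = 0 := by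
          push_cast
          rw [pow_eq_one_of_coprime _ a hcoP htot]
          ring
        have := (ZMod.intCast_zmod_eq_zero_iff_dvd _ _).mp h1
        simpa using this
    exact Int.modEq_iff_dvd.mpr key
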